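/- arXiv:2601.14763 — 2 statements merged into one kernel-verified Lean document; each statement's English description precedes it below -/
import Mathlib

section
/- Let N ≥ 1 and let Q ∈ ℝ^{N×N} be a nonzero symmetric positive semidefinite matrix, let λ_m > 0 be its smallest nonzero eigenvalue, and let Π : ℂ^N → ℂ^N be the orthogonal projection onto the kernel of Q (viewed in ℂ^N). Let K > 0, let B ≥ 0, let u : [0,∞) → ℂ^N be continuous with ‖u(t)‖ ≤ B for all t ≥ 0, and let y : [0,∞) → ℂ^N be differentiable with y'(t) = u(t) − K Q y(t) for all t ≥ 0. Then for all t ≥ 0: ‖y(t) − Πy(t)‖ ≤ e^{−Kλ_m t} ‖y(0) − Πy(0)‖ + B/(Kλ_m), where ‖·‖ is the Euclidean norm on ℂ^N. -/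
/-! Statement 4: ISS-type bound for `y' = u - K Q y` w.r.t. the orthogonal
projection onto the kernel of the positive semidefinite matrix `Q`. -/

open Finset

noncomputable section

/-- The Euclidean norm on `ℂ^N`. -/
def eucNorm {N : ℕ} (v : Fin N → ℂ) : ℝ := Real.sqrt (∑ i, ‖v i‖ ^ 2)

/-- The standard Hermitian inner product on `ℂ^N`. -/
def herm {N : ℕ} (x y : Fin N → ℂ) : ℂ := ∑ i, (starRingEnd ℂ) (x i) * y i

namespace Stmt4Aux

/-- View a vector in `ℂ^N` as an element of the Euclidean space. -/
def eucl {N : ℕ} (x : Fin N → ℂ) : EuclideanSpace ℂ (Fin N) := WithLp.toLp 2 x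

variable {N : ℕ}

lemma herm_eq (x y : Fin N → ℂ) : herm x y = (inner ℂ (eucl x) (eucl y) : ℂ) := by
  simp [herm, eucl, PiLp.inner_apply, mul_comm]

lemma enorm_eq (v : Fin N → ℂ) : eucNorm v = ‖eucl v‖ := (EuclideanSpace.norm_eq _).symm

lemma herm_sub_right (x a b : Fin N → ℂ) : herm x (a - b) = herm x a - herm x b := by
  simp [herm, mul_sub, Finset.sum_sub_distrib]

lemma herm_sub_left (a b v : Fin N → ℂ) : herm (a - b) v = herm a v - herm b v := by
  simp [herm, sub_mul, Finset.sum_sub_distrib]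

lemma herm_add_left (a b v : Fin N → ℂ) : herm (a + b) v = herm a v + herm b v := by
  simp [herm, add_mul, Finset.sum_add_distrib]

lemma herm_smul_left (c : ℂ) (a v : Fin N → ℂ) :
    herm (c • a) v = (starRingEnd ℂ) c * herm (a) v := by
  simp [herm, Finset.mul_sum, mul_assoc]

lemma herm_real_smul_right (K : ℝ) (x w : Fin N → ℂ) :
    herm x (K • w) = (K : ℂ) * herm x w := by
  simp only [herm, Finset.mul_sum]
  refine Finset.sum_congr rfl fun i _ => ?_
  simp [Pi.smul_apply, Complex.real_smul]
  ring

lemma eq_zero_of_herm_self (d : Fin N → ℂ) (h : herm d d = 0) : d = 0 := by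
  have h1 : herm d d = ((∑ i, Complex.normSq (d i) : ℝ) : ℂ) := by
    simp only [herm]
    push_cast
    refine Finset.sum_congr rfl fun i _ => ?_
    rw [mul_comm, Complex.mul_conj]
  rw [h1, Complex.ofReal_eq_zero] at h
  have h2 := (Finset.sum_eq_zero_iff_of_nonneg (fun i _ => Complex.normSq_nonneg (d i))).1 h
  funext i
  exact Complex.normSq_eq_zero.1 (h2 i (Finset.mem_univ i))

/-- Pythagoras: removing an orthogonal component does not increase the norm. -/
lemma norm_sub_le_of_herm (x p : Fin N → ℂ) (h : herm (x - p) p = 0) :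
    ‖eucl (x - p)‖ ≤ ‖eucl x‖ := by
  have hx : eucl x = eucl (x - p) + eucl p := by
    have : x = (x - p) + p := by abel
    exact (congrArg eucl this).trans (WithLp.toLp_add 2 _ _)
  have h2 : ‖eucl x‖ ^ 2 = ‖eucl (x - p)‖ ^ 2 + ‖eucl p‖ ^ 2 := by
    rw [hx, norm_add_sq (𝕜 := ℂ)]
    have hre : RCLike.re (inner ℂ (eucl (x - p)) (eucl p) : ℂ) = 0 := by
      rw [← herm_eq, h]; rfl
    rw [hre]; ring
  nlinarith [norm_nonneg (eucl (x - p)), norm_nonneg (eucl x), norm_nonneg (eucl p)]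

lemma isHermitian_map (Q : Matrix (Fin N) (Fin N) ℝ) (hQsymm : Q.IsSymm) :
    (Q.map (Complex.ofReal)).IsHermitian := by
  ext i j
  simp [Matrix.conjTranspose_apply, Matrix.map_apply, hQsymm.apply]

/-- The spectral inequality: on the orthogonal complement of the kernel, the
quadratic form of `Q` is bounded below by `lam` times the squared norm. -/
lemma spec_ineq (Q : Matrix (Fin N) (Fin N) ℝ) (hQsymm : Q.IsSymm)
    (lam : ℝ)
    (hlow : ∀ r : ℝ, r ≠ 0 → ∀ v : Fin N → ℝ, v ≠ 0 → Q.mulVec v = r • v → lam ≤ r)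
    (z : Fin N → ℂ)
    (hperp : ∀ v : Fin N → ℂ, (Q.map Complex.ofReal).mulVec v = 0 → herm z v = 0) :
    lam * ‖eucl z‖ ^ 2 ≤ (herm z ((Q.map Complex.ofReal).mulVec z)).re := by
  have hH : (Q.map (Complex.ofReal)).IsHermitian := isHermitian_map Q hQsymm
  set b := hH.eigenvectorBasis with hb
  set μ := hH.eigenvalues with hμ
  set c : Fin N → ℂ := fun i => b.repr (eucl z) i with hc
  -- nonzero eigenvalues are at least `lam`
  have hlam_le : ∀ i, μ i ≠ 0 → lam ≤ μ i := by
    intro i hi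
    have hmv := hH.mulVec_eigenvectorBasis i
    set vc : Fin N → ℂ := ⇑(b i) with hvc
    have hcomp : ∀ j, (∑ k, (Q j k : ℂ) * vc k) = (μ i : ℂ) * vc j := by
      intro j
      have := congrFun hmv j
      simpa [Matrix.mulVec, dotProduct, Matrix.map_apply, Pi.smul_apply,
        Complex.real_smul] using this
    have hre : Q.mulVec (fun j => (vc j).re) = μ i • (fun j => (vc j).re) := by
      funext j
      have := congrArg Complex.re (hcomp j)
      simpa [Matrix.mulVec, dotProduct, Complex.re_sum, Complex.mul_re] using this
    have him : Q.mulVec (fun j => (vc j).im) = μ i • (fun j => (vc j).im) := by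
      funext j
      have := congrArg Complex.im (hcomp j)
      simpa [Matrix.mulVec, dotProduct, Complex.im_sum, Complex.mul_im] using this
    have hvc0 : vc ≠ 0 := by
      intro h0
      have hbz : b i = 0 := by
        have : eucl vc = eucl 0 := congrArg eucl h0
        simpa [eucl, vc] using this
      have hn := b.orthonormal.1 i
      rw [hbz] at hn
      simp at hn
    by_cases hre0 : (fun j => (vc j).re) = (0 : Fin N → ℝ)
    · have him0 : (fun j => (vc j).im) ≠ (0 : Fin N → ℝ) := by
        intro h0
        apply hvc0
        funext j
        have h1 := congrFun hre0 j
        have h2 := congrFun h0 j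
        exact Complex.ext h1 h2
      exact hlow (μ i) hi _ him0 him
    · exact hlow (μ i) hi _ hre0 hre
  -- components along the kernel vanish
  have hzero : ∀ i, μ i = 0 → c i = 0 := by
    intro i h0
    have hker : (Q.map Complex.ofReal).mulVec ⇑(b i) = 0 := by
      rw [hH.mulVec_eigenvectorBasis i]
      show μ i • ⇑(b i) = 0
      rw [h0, zero_smul]
    have h1 : herm z ⇑(b i) = 0 := hperp _ hker
    have h2 : (inner ℂ (eucl z) (b i) : ℂ) = 0 := (herm_eq z ⇑(b i)).symm.trans h1
    show b.repr (eucl z) i = 0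
    rw [b.repr_apply_apply]
    rw [← inner_conj_symm, h2, map_zero]
  -- expand the quadratic form in the eigenbasis
  have hrep : ∀ i, b.repr (eucl ((Q.map Complex.ofReal).mulVec z)) i = (μ i : ℂ) * c i := by
    intro i
    have hsymmT := (Matrix.isHermitian_iff_isSymmetric.1 hH)
    have h1 : (Matrix.toEuclideanLin (Q.map Complex.ofReal)) (eucl z)
        = eucl ((Q.map Complex.ofReal).mulVec z) := rfl
    have h2 : (Matrix.toEuclideanLin (Q.map Complex.ofReal)) (b i)
        = eucl ((Q.map Complex.ofReal).mulVec ⇑(b i)) := rfl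
    rw [b.repr_apply_apply, ← h1]
    rw [← hsymmT (b i) (eucl z), h2, hH.mulVec_eigenvectorBasis i]
    have h3 : eucl (μ i • ⇑(b i)) = (μ i : ℝ) • b i := rfl
    rw [h3, RCLike.real_smul_eq_coe_smul (K := ℂ), inner_smul_left]
    have h5 : c i = b.repr (eucl z) i := rfl
    rw [← b.repr_apply_apply, ← h5]
    simp
  have hinner : herm z ((Q.map Complex.ofReal).mulVec z)
      = ∑ i, (starRingEnd ℂ) (c i) * ((μ i : ℂ) * c i) := by
    rw [herm_eq]
    rw [← b.repr.inner_map_map (eucl z) (eucl ((Q.map Complex.ofReal).mulVec z))]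
    have : (inner ℂ (b.repr (eucl z)) (b.repr (eucl ((Q.map Complex.ofReal).mulVec z))) : ℂ)
        = ∑ i, (starRingEnd ℂ) (c i) * (b.repr (eucl ((Q.map Complex.ofReal).mulVec z)) i) := by
          rw [PiLp.inner_apply]
          exact Finset.sum_congr rfl fun i _ => by simp [mul_comm, hc]
    rw [this]
    exact Finset.sum_congr rfl fun i _ => by rw [hrep i]
  have hterm : ∀ i, ((starRingEnd ℂ) (c i) * ((μ i : ℂ) * c i)).re = μ i * ‖c i‖ ^ 2 := by
    intro i
    have : (starRingEnd ℂ) (c i) * ((μ i : ℂ) * c i)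
        = ((μ i : ℝ) : ℂ) * ((Complex.normSq (c i) : ℝ) : ℂ) := by
      rw [← Complex.mul_conj (c i)]
      ring
    rw [this, ← Complex.ofReal_mul, Complex.ofReal_re]
    rw [Complex.normSq_eq_norm_sq]
  have hnorm : ‖eucl z‖ ^ 2 = ∑ i, ‖c i‖ ^ 2 := by
    rw [← b.repr.norm_map (eucl z), EuclideanSpace.norm_eq, Real.sq_sqrt]
    positivity
  rw [hinner, Complex.re_sum]
  calc lam * ‖eucl z‖ ^ 2 = ∑ i, lam * ‖c i‖ ^ 2 := by
        rw [hnorm, Finset.mul_sum]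
    _ ≤ ∑ i, μ i * ‖c i‖ ^ 2 := by
        refine Finset.sum_le_sum fun i _ => ?_
        by_cases h0 : μ i = 0
        · rw [hzero i h0, h0]; simp
        · exact mul_le_mul_of_nonneg_right (hlam_le i h0) (by positivity)
    _ = ∑ i, ((starRingEnd ℂ) (c i) * ((μ i : ℂ) * c i)).re := by
        exact Finset.sum_congr rfl fun i _ => (hterm i).symm

/-- The scalar decay estimate: a curve whose "radial derivative" satisfies a
dissipative inequality obeys an ISS-type bound. -/
lemma decay {E : Type*} [NormedAddCommGroup E] [InnerProductSpace ℂ E]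
    (Kl Bb : ℝ) (hKl : 0 < Kl) (hBb : 0 ≤ Bb)
    (Z Z' : ℝ → E)
    (hZ : ∀ s ≥ (0 : ℝ), HasDerivAt Z (Z' s) s)
    (hbound : ∀ s ≥ (0 : ℝ), (inner ℂ (Z s) (Z' s) : ℂ).re ≤ Bb * ‖Z s‖ - Kl * ‖Z s‖ ^ 2)
    (hZ'0 : ∀ s ≥ (0 : ℝ), Z s = 0 → ‖Z' s‖ ≤ Bb) :
    ∀ t ≥ (0 : ℝ), ‖Z t‖ ≤ Real.exp (-Kl * t) * ‖Z 0‖ + Bb / Kl := by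
  classical
  intro t ht
  have hexp : ∀ s : ℝ, HasDerivAt (fun τ : ℝ => Real.exp (-Kl * τ))
      (-Kl * Real.exp (-Kl * s)) s := by
    intro s
    have h1 : HasDerivAt (fun τ : ℝ => -Kl * τ) (-Kl) s := by
      simpa using (hasDerivAt_id s).const_mul (-Kl)
    have h2 := (Real.hasDerivAt_exp (-Kl * s)).comp s h1
    simp only [Function.comp_def] at h2
    rw [mul_comm (Real.exp (-Kl * s)) (-Kl)] at h2
    exact h2
  -- squared-norm derivative
  have hq : ∀ s ≥ (0 : ℝ), HasDerivAt (fun τ => ‖Z τ‖ ^ 2)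
      (2 * (inner ℂ (Z s) (Z' s) : ℂ).re) s := by
    intro s hs
    have h1 := HasDerivAt.inner ℂ (hZ s hs) (hZ s hs)
    have h2 := Complex.reCLM.hasFDerivAt.comp_hasDerivAt s h1
    have hfun : (fun τ => Complex.reCLM ((inner ℂ (Z τ) (Z τ) : ℂ))) = fun τ => ‖Z τ‖ ^ 2 := by
      funext τ
      have := inner_self_eq_norm_sq (𝕜 := ℂ) (Z τ)
      simpa [Complex.reCLM_apply, RCLike.re_to_complex] using this
    have hval : Complex.reCLM ((inner ℂ (Z s) (Z' s) : ℂ) + (inner ℂ (Z' s) (Z s) : ℂ))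
        = 2 * (inner ℂ (Z s) (Z' s) : ℂ).re := by
      have hconj : (inner ℂ (Z' s) (Z s) : ℂ) = (starRingEnd ℂ) (inner ℂ (Z s) (Z' s) : ℂ) :=
        (inner_conj_symm _ _).symm
      rw [map_add, hconj]
      simp only [Complex.reCLM_apply, Complex.conj_re]
      ring
    rw [← hfun, ← hval]
    exact h2
  have key : ∀ ε > (0 : ℝ), ‖Z t‖ ≤ Real.exp (-Kl * t) * ‖Z 0‖
      + (Bb + ε) / Kl * (1 - Real.exp (-Kl * t)) := by
    intro ε hε
    set g0 : ℝ := ‖Z 0‖ with hg0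
    set C : ℝ := (Bb + ε) / Kl with hC
    set φ : ℝ → ℝ := fun s => Real.exp (-Kl * s) * g0 + C * (1 - Real.exp (-Kl * s)) with hφdef
    set f' : ℝ → ℝ := fun s =>
      if Z s = 0 then ‖Z' s‖ else (inner ℂ (Z s) (Z' s) : ℂ).re / ‖Z s‖ with hf'def
    have hKl0 : Kl ≠ 0 := hKl.ne'
    have hφ : ∀ s, HasDerivAt φ (-Kl * φ s + (Bb + ε)) s := by
      intro s
      have h1 := ((hexp s).mul_const g0).add (((hexp s).const_sub 1).const_mul C)
      refine h1.congr_deriv ?_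
      simp only [hφdef, hC]
      field_simp
      ring
    have hgc : ContinuousOn (fun s => ‖Z s‖) (Set.Icc 0 t) := by
      intro s hs
      exact ((hZ s hs.1).continuousAt.continuousWithinAt).norm
    have hslope : ∀ x ∈ Set.Ico (0 : ℝ) t, ∀ r, f' x < r →
        ∃ᶠ z in nhdsWithin x (Set.Ioi x), slope (fun s => ‖Z s‖) x z < r := by
      intro x hx r hr
      by_cases hz : Z x = 0
      · rw [hf'def] at hr
        simp only [if_pos hz] at hr
        have h1 := ((hZ x hx.1).hasDerivWithinAt (s := Set.Ici x)).liminf_right_slope_norm_le hr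
        refine h1.mono fun z hz' => ?_
        rwa [slope_def_field, div_eq_inv_mul]
      · rw [hf'def] at hr
        simp only [if_neg hz] at hr
        have hnz : ‖Z x‖ ^ 2 ≠ 0 := pow_ne_zero _ (norm_ne_zero_iff.2 hz)
        have h3 := (Real.hasDerivAt_sqrt hnz).comp x (hq x hx.1)
        have hfun : (Real.sqrt ∘ fun τ => ‖Z τ‖ ^ 2) = fun τ => ‖Z τ‖ := by
          funext τ
          simp [Function.comp, Real.sqrt_sq (norm_nonneg _)]
        rw [hfun] at h3
        have hval : 1 / (2 * Real.sqrt (‖Z x‖ ^ 2)) * (2 * (inner ℂ (Z x) (Z' x) : ℂ).re)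
            = (inner ℂ (Z x) (Z' x) : ℂ).re / ‖Z x‖ := by
          rw [Real.sqrt_sq (norm_nonneg _)]
          have h0 : ‖Z x‖ ≠ 0 := norm_ne_zero_iff.2 hz
          field_simp
        rw [hval] at h3
        exact h3.hasDerivWithinAt.liminf_right_slope_le hr
    have hbd : ∀ x ∈ Set.Ico (0 : ℝ) t, ‖Z x‖ = φ x → f' x < -Kl * φ x + (Bb + ε) := by
      intro x hx heq
      by_cases hz : Z x = 0
      · rw [hf'def]
        simp only [if_pos hz]
        have h1 : ‖Z' x‖ ≤ Bb := hZ'0 x hx.1 hz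
        have h2 : φ x = 0 := by rw [← heq, hz, norm_zero]
        rw [h2]
        simp only [mul_zero, neg_zero, zero_add]
        linarith
      · rw [hf'def]
        simp only [if_neg hz]
        have hpos : 0 < ‖Z x‖ := norm_pos_iff.2 hz
        have hD := hbound x hx.1
        rw [div_lt_iff₀ hpos, ← heq]
        nlinarith [mul_pos hε hpos]
    have ha : ‖Z 0‖ ≤ φ 0 := by
      simp [hφdef, hg0]
    have := image_le_of_liminf_slope_right_lt_deriv_boundary (f := fun s => ‖Z s‖)
      (f' := f') (a := 0) (b := t) hgc hslope ha hφ hbd ⟨ht, le_rfl⟩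
    simpa [hφdef, hg0, hC] using this
  refine le_of_forall_pos_le_add ?_
  intro ε' hε'
  have h := key (ε' * Kl) (by positivity)
  have hE : 0 < Real.exp (-Kl * t) := Real.exp_pos _
  have h1 : (Bb + ε' * Kl) / Kl * (1 - Real.exp (-Kl * t)) ≤ (Bb + ε' * Kl) / Kl := by
    have h2 : (1 - Real.exp (-Kl * t)) ≤ 1 := by linarith
    have h3 : (0 : ℝ) ≤ (Bb + ε' * Kl) / Kl := by positivity
    nlinarith
  have h4 : (Bb + ε' * Kl) / Kl = Bb / Kl + ε' := by
    field_simp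
  linarith

end Stmt4Aux

open Stmt4Aux in
theorem stmt4 (N : ℕ) (hN : 1 ≤ N)
    (Q : Matrix (Fin N) (Fin N) ℝ) (hQ0 : Q ≠ 0) (hQsymm : Q.IsSymm) (hQpsd : Q.PosSemidef)
    -- `lam` is the smallest nonzero eigenvalue of `Q`
    (lam : ℝ) (hlam_pos : 0 < lam)
    (hlam : IsLeast {r : ℝ | r ≠ 0 ∧ ∃ v : Fin N → ℝ, v ≠ 0 ∧ Q.mulVec v = r • v} lam)
    -- `Pr` is the orthogonal projection of `ℂ^N` onto the kernel of `Q` (viewed in `ℂ^N`):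
    -- `Pr y` lies in the kernel, and `y - Pr y` is orthogonal to the kernel
    (Pr : (Fin N → ℂ) → (Fin N → ℂ))
    (hPr : ∀ y : Fin N → ℂ,
      (Q.map (Complex.ofReal)).mulVec (Pr y) = 0 ∧
      ∀ v : Fin N → ℂ, (Q.map (Complex.ofReal)).mulVec v = 0 → herm (y - Pr y) v = 0)
    (K : ℝ) (hK : 0 < K) (B : ℝ) (hB : 0 ≤ B)
    (u : ℝ → Fin N → ℂ) (hu_cont : ContinuousOn u (Set.Ici 0))
    (hu_bound : ∀ t ≥ (0 : ℝ), eucNorm (u t) ≤ B)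
    (y : ℝ → Fin N → ℂ)
    (hy : ∀ t ≥ (0 : ℝ),
      HasDerivAt y (u t - K • (Q.map (Complex.ofReal)).mulVec (y t)) t) :
    ∀ t ≥ (0 : ℝ),
      eucNorm (y t - Pr (y t)) ≤
        Real.exp (-(K * lam) * t) * eucNorm (y 0 - Pr (y 0)) + B / (K * lam) := by
  set Qc := Q.map (Complex.ofReal) with hQc
  -- `Pr` is uniquely determined, hence linear
  have huniq : ∀ (x a : Fin N → ℂ), Qc.mulVec a = 0 →
      (∀ v, Qc.mulVec v = 0 → herm (x - a) v = 0) → a = Pr x := by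
    intro x a ha hp
    have hd : Qc.mulVec (a - Pr x) = 0 := by
      rw [Matrix.mulVec_sub, ha, (hPr x).1, sub_zero]
    have h1 : herm (a - Pr x) (a - Pr x) = 0 := by
      have h2 : herm (x - Pr x) (a - Pr x) = 0 := (hPr x).2 _ hd
      have h3 : herm (x - a) (a - Pr x) = 0 := hp _ hd
      have h4 : herm (x - Pr x) (a - Pr x) - herm (x - a) (a - Pr x)
          = herm (a - Pr x) (a - Pr x) := by
        rw [← herm_sub_left]
        congr 1
        abel
      rw [h2, h3] at h4
      simpa using h4.symm
    have := eq_zero_of_herm_self _ h1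
    have h5 : a - Pr x = 0 := this
    linear_combination (norm := module) h5
  have hadd : ∀ x x', Pr (x + x') = Pr x + Pr x' := by
    intro x x'
    refine (huniq (x + x') (Pr x + Pr x') ?_ ?_).symm
    · rw [Matrix.mulVec_add, (hPr x).1, (hPr x').1, add_zero]
    · intro v hv
      have h1 : (x + x') - (Pr x + Pr x') = (x - Pr x) + (x' - Pr x') := by abel
      rw [h1, herm_add_left, (hPr x).2 v hv, (hPr x').2 v hv, add_zero]
  have hsmul : ∀ (c : ℂ) x, Pr (c • x) = c • Pr x := by
    intro c x
    refine (huniq (c • x) (c • Pr x) ?_ ?_).symm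
    · rw [Matrix.mulVec_smul, (hPr x).1, smul_zero]
    · intro v hv
      have h1 : c • x - c • Pr x = c • (x - Pr x) := (smul_sub c x (Pr x)).symm
      rw [h1, herm_smul_left, (hPr x).2 v hv, mul_zero]
  let PrL : (Fin N → ℂ) →ₗ[ℂ] (Fin N → ℂ) :=
    { toFun := Pr, map_add' := hadd, map_smul' := hsmul }
  let PrR : (Fin N → ℂ) →L[ℝ] (Fin N → ℂ) :=
    (LinearMap.toContinuousLinearMap PrL).restrictScalars ℝ
  let L : (Fin N → ℂ) →L[ℝ] EuclideanSpace ℂ (Fin N) :=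
    ((EuclideanSpace.equiv (Fin N) ℂ).symm.toContinuousLinearMap).restrictScalars ℝ
  -- the curve and its derivative
  set v : ℝ → Fin N → ℂ := fun s => u s - K • Qc.mulVec (y s) with hv
  set Z : ℝ → EuclideanSpace ℂ (Fin N) := fun s => eucl (y s - Pr (y s)) with hZdef
  set Z' : ℝ → EuclideanSpace ℂ (Fin N) := fun s => eucl (v s - Pr (v s)) with hZ'def
  have hZderiv : ∀ s ≥ (0 : ℝ), HasDerivAt Z (Z' s) s := by
    intro s hs
    have h1 : HasDerivAt (fun τ => y τ - PrR (y τ)) (v s - PrR (v s)) s :=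
      (hy s hs).sub (PrR.hasFDerivAt.comp_hasDerivAt s (hy s hs))
    have h2 := L.hasFDerivAt.comp_hasDerivAt s h1
    exact h2
  -- kernel facts
  have hQz : ∀ s, Qc.mulVec (y s - Pr (y s)) = Qc.mulVec (y s) := by
    intro s
    rw [Matrix.mulVec_sub, (hPr (y s)).1, sub_zero]
  have hlow : ∀ r : ℝ, r ≠ 0 → ∀ w : Fin N → ℝ, w ≠ 0 → Q.mulVec w = r • w → lam ≤ r :=
    fun r hr0 w hw0 hweq => hlam.2 ⟨hr0, w, hw0, hweq⟩
  have hKl : 0 < K * lam := mul_pos hK hlam_pos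
  -- dissipativity bound
  have hbound : ∀ s ≥ (0 : ℝ), (inner ℂ (Z s) (Z' s) : ℂ).re
      ≤ B * ‖Z s‖ - (K * lam) * ‖Z s‖ ^ 2 := by
    intro s hs
    set zs := y s - Pr (y s) with hzs
    have h0 : (inner ℂ (Z s) (Z' s) : ℂ) = herm zs (v s - Pr (v s)) := (herm_eq _ _).symm
    have h1 : herm zs (Pr (v s)) = 0 := (hPr (y s)).2 _ (hPr (v s)).1
    have h2 : herm zs (v s - Pr (v s)) = herm zs (v s) := by
      rw [herm_sub_right, h1, sub_zero]
    have h3 : herm zs (v s) = herm zs (u s) - (K : ℂ) * herm zs (Qc.mulVec zs) := by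
      rw [hv]
      rw [herm_sub_right, herm_real_smul_right]
      rw [hzs, hQz s]
    have hre : (inner ℂ (Z s) (Z' s) : ℂ).re
        = (herm zs (u s)).re - K * (herm zs (Qc.mulVec zs)).re := by
      rw [h0, h2, h3]
      simp [Complex.sub_re, Complex.mul_re]
    -- Cauchy-Schwarz for the input term
    have hcs : (herm zs (u s)).re ≤ ‖Z s‖ * B := by
      have hcs1 : (herm zs (u s)).re ≤ ‖eucl zs‖ * ‖eucl (u s)‖ := by
        rw [herm_eq]
        exact re_inner_le_norm (𝕜 := ℂ) _ _
      have hub : ‖eucl (u s)‖ ≤ B := by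
        rw [← enorm_eq]
        exact hu_bound s hs
      have := mul_le_mul_of_nonneg_left hub (norm_nonneg (eucl zs))
      calc (herm zs (u s)).re ≤ ‖eucl zs‖ * ‖eucl (u s)‖ := hcs1
        _ ≤ ‖eucl zs‖ * B := this
        _ = ‖Z s‖ * B := rfl
    -- spectral bound for the quadratic term
    have hspec : lam * ‖Z s‖ ^ 2 ≤ (herm zs (Qc.mulVec zs)).re := by
      have := spec_ineq Q hQsymm lam hlow zs (hPr (y s)).2
      exact this
    have hmul := mul_le_mul_of_nonneg_left hspec hK.le
    rw [hre]
    nlinarith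
  -- bound on the derivative at zeros of `Z`
  have hZ'0 : ∀ s ≥ (0 : ℝ), Z s = 0 → ‖Z' s‖ ≤ B := by
    intro s hs hz
    have hzs0 : y s - Pr (y s) = 0 := (WithLp.toLp_eq_zero 2).1 hz
    have hQy : Qc.mulVec (y s) = 0 := by
      rw [← hQz s, hzs0, Matrix.mulVec_zero]
    have hvs : v s = u s := by
      rw [hv]
      simp [hQy]
    have h1 : ‖eucl (u s - Pr (u s))‖ ≤ ‖eucl (u s)‖ :=
      norm_sub_le_of_herm (u s) (Pr (u s)) ((hPr (u s)).2 _ (hPr (u s)).1)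
    have h2 : ‖Z' s‖ = ‖eucl (u s - Pr (u s))‖ := by
      rw [hZ'def]
      simp only [hvs]
    rw [h2]
    exact h1.trans (by rw [← enorm_eq]; exact hu_bound s hs)
  -- apply the decay lemma
  have hdec := decay (K * lam) B hKl hB Z Z' hZderiv hbound hZ'0
  intro t ht
  have := hdec t ht
  rw [enorm_eq, enorm_eq]
  calc ‖eucl (y t - Pr (y t))‖ = ‖Z t‖ := rfl
    _ ≤ Real.exp (-(K * lam) * t) * ‖Z 0‖ + B / (K * lam) := this
    _ = Real.exp (-(K * lam) * t) * ‖eucl (y 0 - Pr (y 0))‖ + B / (K * lam) := rfl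

end
end

section
/- Let N ≥ 1, let Q ∈ ℝ^{N×N} be a nonzero symmetric positive semidefinite matrix with smallest nonzero eigenvalue λ_m > 0, let p := dim ker Q ≥ 1, and let P ∈ ℝ^{N×p} be a matrix whose columns form an orthonormal basis of ker Q. Let A ∈ ℂ^{N×N} and assume that every eigenvalue of PᵀAP ∈ ℂ^{p×p} has nonpositive real part. Then for every η > 0 and every 0 < T₁ ≤ T₂ there exists K* > 0 such that for all K ≥ K*: whenever y : [0,∞) → ℂ^N is differentiable with y'(t) = A y(t) − K Q y(t) and ‖y(t)‖ ≤ 1 for all t ≥ 0, and y_d : [0,∞) → ℂ^p is the solution of y_d'(t) = (PᵀAP) y_d(t) with y_d(0) = Pᵀ y(0), one has ‖y(t) − P y_d(t)‖ ≤ η for all t ∈ [T₁, T₂]. -/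
/-! Statement 5: blended (quasi-steady-state) tracking for the singularly
perturbed linear system `y' = A y - K Q y` with rank-deficient coupling `Q`. -/

open Finset Matrix

noncomputable section

/-- The Euclidean norm on `ℂ^N`. -/
def cEnorm {N : ℕ} (v : Fin N → ℂ) : ℝ := Real.sqrt (∑ i, ‖v i‖ ^ 2)

namespace Stmt5

open Complex Set
open scoped ComplexInnerProductSpace ComplexOrder

variable {m n k : ℕ}

abbrev ES (n : ℕ) := EuclideanSpace ℂ (Fin n)

def toE {n : ℕ} (v : Fin n → ℂ) : ES n := (WithLp.equiv 2 (Fin n → ℂ)).symm v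

def mclm (M : Matrix (Fin m) (Fin n) ℂ) : ES n →L[ℂ] ES m :=
  LinearMap.toContinuousLinearMap (Matrix.toEuclideanLin M)

lemma mclm_toE (M : Matrix (Fin m) (Fin n) ℂ) (v : Fin n → ℂ) :
    mclm M (toE v) = toE (M *ᵥ v) := by
  simp [mclm, toE, Matrix.toEuclideanLin_apply]

lemma toE_surj : Function.Surjective (toE (n := n)) :=
  (WithLp.equiv 2 (Fin n → ℂ)).symm.surjective

lemma toE_inj {a b : Fin n → ℂ} (h : toE a = toE b) : a = b :=
  (WithLp.equiv 2 (Fin n → ℂ)).symm.injective h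

lemma toE_sub (a b : Fin n → ℂ) : toE (a - b) = toE a - toE b := rfl

lemma toE_smul (r : ℝ) (a : Fin n → ℂ) : toE (r • a) = r • toE a := rfl

lemma toE_add (a b : Fin n → ℂ) : toE (a + b) = toE a + toE b := rfl

lemma mclm_mul (M₁ : Matrix (Fin m) (Fin n) ℂ) (M₂ : Matrix (Fin n) (Fin k) ℂ) (x : ES k) :
    mclm (M₁ * M₂) x = mclm M₁ (mclm M₂ x) := by
  obtain ⟨v, rfl⟩ := toE_surj x
  simp [mclm_toE, Matrix.mulVec_mulVec]

lemma mclm_one (x : ES n) : mclm (1 : Matrix (Fin n) (Fin n) ℂ) x = x := by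
  obtain ⟨v, rfl⟩ := toE_surj x
  simp [mclm_toE]

lemma mclm_add (M₁ M₂ : Matrix (Fin m) (Fin n) ℂ) (x : ES n) :
    mclm (M₁ + M₂) x = mclm M₁ x + mclm M₂ x := by
  simp [mclm, map_add]

lemma mclm_zero (x : ES n) : mclm (0 : Matrix (Fin m) (Fin n) ℂ) x = 0 := by
  simp [mclm, map_zero]

lemma enorm_toE (v : Fin n → ℂ) : cEnorm v = ‖toE v‖ := by
  rw [EuclideanSpace.norm_eq, cEnorm]
  rfl

lemma inner_piLp_equiv_symm' (x y : Fin n → ℂ) :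
    ⟪(WithLp.equiv 2 (Fin n → ℂ)).symm x, (WithLp.equiv 2 (Fin n → ℂ)).symm y⟫ = star x ⬝ᵥ y :=
  (EuclideanSpace.inner_toLp_toLp x y).trans (dotProduct_comm _ _)

lemma inner_mclm (M : Matrix (Fin m) (Fin n) ℂ) (x : ES m) (v : ES n) :
    ⟪x, mclm M v⟫ = ⟪mclm Mᴴ x, v⟫ := by
  obtain ⟨a, rfl⟩ := toE_surj x
  obtain ⟨b, rfl⟩ := toE_surj v
  rw [mclm_toE, mclm_toE]
  simp only [toE, inner_piLp_equiv_symm']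
  rw [Matrix.dotProduct_mulVec, Matrix.star_mulVec, conjTranspose_conjTranspose]

lemma hasDerivAt_toE {f : ℝ → Fin n → ℂ} {f' : Fin n → ℂ} {t : ℝ}
    (h : HasDerivAt f f' t) : HasDerivAt (fun s => toE (f s)) (toE f') t := by
  exact (((PiLp.continuousLinearEquiv 2 ℂ
    (fun _ : Fin n => ℂ)).symm.toContinuousLinearMap.restrictScalars
    ℝ).hasFDerivAt).comp_hasDerivAt t h

lemma hasDerivAt_mclm (M : Matrix (Fin m) (Fin n) ℂ) {f : ℝ → ES n} {f' : ES n} {t : ℝ}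
    (h : HasDerivAt f f' t) : HasDerivAt (fun s => mclm M (f s)) (mclm M f') t :=
  (((mclm M).restrictScalars ℝ).hasFDerivAt).comp_hasDerivAt t h

lemma rsmul (r : ℝ) (x : ES n) : r • x = (r : ℂ) • x := by
  rw [RCLike.real_smul_eq_coe_smul (K := ℂ)]
  rfl

lemma norm_le_of_sq_le_sq' {a b : ℝ} (h : a ^ 2 ≤ b ^ 2) (hb : 0 ≤ b) (ha : 0 ≤ a) : a ≤ b := by
  nlinarith

lemma norm_mclm_isometry {N p : ℕ} (Pc : Matrix (Fin N) (Fin p) ℂ) (h : Pcᴴ * Pc = 1)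
    (v : ES p) : ‖mclm Pc v‖ = ‖v‖ := by
  rw [@norm_eq_sqrt_re_inner ℂ, @norm_eq_sqrt_re_inner ℂ]
  congr 1
  rw [inner_mclm, ← mclm_mul, h, mclm_one]

lemma norm_proj_le {N : ℕ} (Pi : Matrix (Fin N) (Fin N) ℂ) (hH : Piᴴ = Pi)
    (hI : Pi * Pi = Pi) (x : ES N) : ‖mclm (1 - Pi) x‖ ≤ ‖x‖ := by
  have hsum : mclm Pi x + mclm (1 - Pi) x = x := by
    rw [← mclm_add, add_sub_cancel, mclm_one]
  have horth : ⟪mclm Pi x, mclm (1 - Pi) x⟫ = 0 := by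
    rw [inner_mclm, ← mclm_mul]
    have h0 : (1 - Pi)ᴴ * Pi = 0 := by
      rw [conjTranspose_sub, conjTranspose_one, hH, sub_mul, one_mul, hI, sub_self]
    rw [h0, mclm_zero, inner_zero_left]
  have hx2 : ‖x‖ ^ 2 = ‖mclm Pi x‖ ^ 2 + ‖mclm (1 - Pi) x‖ ^ 2 := by
    conv_lhs => rw [← hsum]
    rw [@norm_add_sq ℂ, horth]
    simp
  apply norm_le_of_sq_le_sq' _ (norm_nonneg x) (norm_nonneg _)
  nlinarith [sq_nonneg ‖mclm Pi x‖]

lemma inner_self_re {N : ℕ} (x : ES N) : (⟪x, x⟫).re = ‖x‖ ^ 2 := by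
  have h := @inner_self_eq_norm_sq ℂ _ _ _ _ x
  simpa using h

lemma le_of_deriv_nonpos {f f' : ℝ → ℝ} {a b : ℝ} (hab : a ≤ b)
    (hd : ∀ t ∈ Set.Icc a b, HasDerivAt f (f' t) t)
    (h0 : ∀ t ∈ Set.Icc a b, f' t ≤ 0) : f b ≤ f a := by
  have h : AntitoneOn f (Set.Icc a b) := by
    apply antitoneOn_of_deriv_nonpos (convex_Icc a b)
    · exact fun t ht => (hd t ht).continuousAt.continuousWithinAt
    · intro t ht
      rw [interior_Icc] at ht
      exact ((hd t (Set.mem_Icc_of_Ioo ht)).differentiableAt).differentiableWithinAt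
    · intro t ht
      rw [interior_Icc] at ht
      rw [(hd t (Set.mem_Icc_of_Ioo ht)).deriv]
      exact h0 t (Set.mem_Icc_of_Ioo ht)
  exact h (Set.left_mem_Icc.2 hab) (Set.right_mem_Icc.2 hab) hab

lemma gronwallBound_le {δ K ε x T : ℝ} (hδ : 0 ≤ δ) (hK : 0 < K) (hε : 0 ≤ ε)
    (hx : 0 ≤ x) (hxT : x ≤ T) :
    gronwallBound δ K ε x ≤ (δ + ε / K) * Real.exp (K * T) := by
  simp only [gronwallBound_of_K_ne_0 hK.ne']
  have h1 : Real.exp (K * x) ≤ Real.exp (K * T) := Real.exp_le_exp.mpr (by nlinarith)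
  have h2 : 0 < Real.exp (K * x) := Real.exp_pos _
  have h3 : 0 ≤ ε / K := by positivity
  nlinarith

lemma arith1 {K lam δ ε₀ : ℝ} (hδ : 0 < δ) (hlam : 0 < lam) (hε₀ : 0 < ε₀)
    (h : Real.log (1 / ε₀) / (lam * δ) ≤ K) : Real.exp (-(K * lam * δ)) ≤ ε₀ := by
  rw [div_le_iff₀ (by positivity : (0:ℝ) < lam * δ)] at h
  rw [one_div, Real.log_inv] at h
  have h3 : -(K * lam * δ) ≤ Real.log ε₀ := by nlinarith
  calc Real.exp (-(K * lam * δ)) ≤ Real.exp (Real.log ε₀) := Real.exp_le_exp.mpr h3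
    _ = ε₀ := Real.exp_log hε₀

lemma arith2 {K lam CC ε₀ : ℝ} (hlam : 0 < lam) (hK : 0 < K) (hε₀ : 0 < ε₀) (hCC : 0 ≤ CC)
    (h : CC / (lam * ε₀ ^ 2) ≤ K) : Real.sqrt (CC / (K * lam)) ≤ ε₀ := by
  rw [div_le_iff₀ (by positivity : (0:ℝ) < lam * ε₀ ^ 2)] at h
  have h1 : CC / (K * lam) ≤ ε₀ ^ 2 := by
    rw [div_le_iff₀ (by positivity)]
    nlinarith
  calc Real.sqrt (CC / (K * lam)) ≤ Real.sqrt (ε₀ ^ 2) := Real.sqrt_le_sqrt h1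
    _ = ε₀ := Real.sqrt_sq hε₀.le

lemma arith3 {w dd εK c1 c2 r η M2 MM ET ε₀ : ℝ}
    (hw : w ≤ εK) (hd : dd ≤ (M2 / MM * r + M2 * εK / MM) * ET)
    (e1 : εK + (M2 / MM * r + M2 * εK / MM) * ET = εK * c2 + c1 * r)
    (hεK2 : εK ≤ 2 * ε₀) (hc2 : 0 < c2) (e3 : 2 * ε₀ * c2 = 2 * η / 3)
    (e4 : c1 * r ≤ η / 3) : w + dd ≤ η := by
  nlinarith

lemma arith4 {c1 η : ℝ} (hc1 : 0 ≤ c1) (hη : 0 < η) : c1 * (η / (3 * (c1 + 1))) ≤ η / 3 := by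
  have h1 : (0:ℝ) < 3 * (c1 + 1) := by nlinarith
  rw [← mul_div_assoc, div_le_div_iff₀ h1 (by norm_num : (0:ℝ) < 3)]
  nlinarith

lemma arith5 {c2 η : ℝ} (hc2 : 0 < c2) : 2 * (η / (3 * c2)) * c2 = 2 * η / 3 := by
  field_simp

lemma spectral_bound {N p : ℕ} (Q : Matrix (Fin N) (Fin N) ℝ) (hQpsd : Q.PosSemidef)
    (lam : ℝ) (hlam_pos : 0 < lam)
    (hlam_lb : ∀ r : ℝ, r ≠ 0 → (∃ v : Fin N → ℝ, v ≠ 0 ∧ Q.mulVec v = r • v) → lam ≤ r)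
    (P : Matrix (Fin N) (Fin p) ℝ)
    (hPortho : Pᵀ * P = 1)
    (hQP : Q * P = 0)
    (hPspan : ∀ v : Fin N → ℝ, Q.mulVec v = 0 → ∃ c : Fin p → ℝ, v = P.mulVec c) :
    ∀ v : Fin N → ℂ, (Pᵀ.map Complex.ofReal) *ᵥ v = 0 →
      lam * (star v ⬝ᵥ v).re ≤ (star v ⬝ᵥ (Q.map Complex.ofReal) *ᵥ v).re := by
  classical
  have hQsym : Qᵀ = Q := by
    have h := hQpsd.1
    rwa [Matrix.IsHermitian, Matrix.conjTranspose_eq_transpose_of_trivial] at h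
  have hPtQ : Pᵀ * Q = 0 := by
    have h := congrArg Matrix.transpose hQP
    rwa [Matrix.transpose_mul, hQsym, Matrix.transpose_zero] at h
  set M : Matrix (Fin N) (Fin N) ℝ := Q + lam • (P * Pᵀ) - lam • (1 : Matrix _ _ ℝ) with hMdef
  have hM : M.IsHermitian := by
    have h1 : Mᵀ = M := by
      rw [hMdef]
      simp [Matrix.transpose_add, Matrix.transpose_sub, Matrix.transpose_smul,
        Matrix.transpose_mul, Matrix.transpose_transpose, hQsym]
    rwa [Matrix.IsHermitian, Matrix.conjTranspose_eq_transpose_of_trivial]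
  have heig : ∀ i, 0 ≤ hM.eigenvalues i := by
    intro i
    set t := hM.eigenvalues i with ht_def
    set u : Fin N → ℝ := ⇑(hM.eigenvectorBasis i) with hu_def
    have hu : M *ᵥ u = t • u := hM.mulVec_eigenvectorBasis i
    have hu0 : u ≠ 0 := by
      intro h
      exact hM.eigenvectorBasis.toBasis.ne_zero i (by ext j; exact congrFun h j)
    set c : Fin p → ℝ := Pᵀ *ᵥ u with hc_def
    have h1 : Q *ᵥ u + lam • (P *ᵥ c) - lam • u = t • u := by
      rw [← hu, hMdef]
      simp [Matrix.add_mulVec, Matrix.sub_mulVec, Matrix.smul_mulVec,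
        Matrix.one_mulVec, ← Matrix.mulVec_mulVec]
      rfl
    have h2 : t • c = 0 := by
      have h3 := congrArg (fun w => Pᵀ *ᵥ w) h1
      simp only [Matrix.mulVec_add, Matrix.mulVec_sub, Matrix.mulVec_smul,
        Matrix.mulVec_mulVec, hPtQ, Matrix.zero_mulVec, hPortho, Matrix.one_mulVec] at h3
      simpa [hc_def] using h3.symm
    by_cases hc : c = 0
    · have hQu : Q *ᵥ u = (t + lam) • u := by
        rw [hc] at h1
        simp only [Matrix.mulVec_zero, smul_zero, add_zero] at h1
        have h4 : Q *ᵥ u = t • u + lam • u := by linear_combination (norm := module) h1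
        rw [h4, add_smul]
      by_cases ht : t + lam = 0
      · exfalso
        rw [ht, zero_smul] at hQu
        obtain ⟨c', hc'⟩ := hPspan u hQu
        have h5 : c = c' := by
          rw [hc_def, hc', Matrix.mulVec_mulVec, hPortho, Matrix.one_mulVec]
        rw [h5] at hc
        rw [hc, Matrix.mulVec_zero] at hc'
        exact hu0 hc'
      · have h6 := hlam_lb (t + lam) ht ⟨u, hu0, hQu⟩
        linarith
    · rcases smul_eq_zero.mp h2 with h | h
      · exact h.ge
      · exact absurd h hc
  have hMpsd : M.PosSemidef := (Matrix.IsHermitian.posSemidef_iff_eigenvalues_nonneg hM).mpr heig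
  obtain ⟨B, hB⟩ : ∃ B : Matrix (Fin N) (Fin N) ℝ, M = Bᵀ * B := by
    open scoped MatrixOrder in
    obtain ⟨B, hB⟩ := CStarAlgebra.nonneg_iff_eq_star_mul_self.mp hMpsd.nonneg
    exact ⟨B, by rw [hB, star_eq_conjTranspose, conjTranspose_eq_transpose_of_trivial]⟩
  have key : ∀ v : Fin N → ℂ, 0 ≤ (star v ⬝ᵥ (M.map Complex.ofReal) *ᵥ v).re := by
    intro v
    have hmap : (M.map Complex.ofReal) =
        (B.map Complex.ofReal)ᴴ * (B.map Complex.ofReal) := by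
      rw [hB]
      ext i j
      simp only [Matrix.map_apply, Matrix.mul_apply, Matrix.conjTranspose_apply,
        RCLike.star_def, Complex.conj_ofReal, star_trivial]
      push_cast
      rfl
    rw [hmap]
    exact (Matrix.posSemidef_conjTranspose_mul_self _).re_dotProduct_nonneg v
  intro v hv
  have hPc : ((P * Pᵀ).map Complex.ofReal) *ᵥ v = 0 := by
    have hsplit : (P * Pᵀ).map Complex.ofReal
        = (P.map Complex.ofReal) * (Pᵀ.map Complex.ofReal) := by
      ext i j
      simp only [Matrix.map_apply, Matrix.mul_apply]
      push_cast
      rfl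
    rw [hsplit, ← Matrix.mulVec_mulVec, hv, Matrix.mulVec_zero]
  have hmap2 : M.map Complex.ofReal = Q.map Complex.ofReal
      + (lam : ℂ) • ((P * Pᵀ).map Complex.ofReal) - (lam : ℂ) • (1 : Matrix _ _ ℂ) := by
    ext i j
    simp only [hMdef, Matrix.map_apply, Matrix.sub_apply, Matrix.add_apply, Matrix.smul_apply,
      Matrix.one_apply, smul_eq_mul]
    split_ifs <;> push_cast <;> ring
  have hkey := key v
  rw [hmap2] at hkey
  simp only [Matrix.add_mulVec, Matrix.sub_mulVec, Matrix.smul_mulVec, hPc, smul_zero,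
    add_zero, Matrix.one_mulVec, dotProduct_sub, dotProduct_smul, smul_eq_mul,
    Complex.sub_re, Complex.mul_re, Complex.ofReal_re, Complex.ofReal_im, zero_mul] at hkey
  linarith

end Stmt5

open Stmt5 Set
open scoped ComplexInnerProductSpace

set_option maxHeartbeats 2000000 in
theorem stmt5 (N p : ℕ) (hN : 1 ≤ N) (hp : 1 ≤ p)
    (Q : Matrix (Fin N) (Fin N) ℝ) (hQ0 : Q ≠ 0) (hQpsd : Q.PosSemidef)
    -- `lam` is the smallest nonzero eigenvalue of `Q`
    (lam : ℝ) (hlam_pos : 0 < lam)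
    (hlam : IsLeast {r : ℝ | r ≠ 0 ∧ ∃ v : Fin N → ℝ, v ≠ 0 ∧ Q.mulVec v = r • v} lam)
    -- the columns of `P` form an orthonormal basis of `ker Q` (so `p = dim ker Q`)
    (P : Matrix (Fin N) (Fin p) ℝ)
    (hPortho : Pᵀ * P = 1)
    (hPker : ∀ j : Fin p, Q.mulVec (fun i => P i j) = 0)
    (hPspan : ∀ v : Fin N → ℝ, Q.mulVec v = 0 → ∃ c : Fin p → ℝ, v = P.mulVec c)
    (A : Matrix (Fin N) (Fin N) ℂ)
    -- every eigenvalue of `PᵀAP` has nonpositive real part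
    (hPAP : ∀ μ : ℂ,
      (∃ v : Fin p → ℂ, v ≠ 0 ∧
        ((P.map Complex.ofReal)ᵀ * A * P.map Complex.ofReal).mulVec v = μ • v) → μ.re ≤ 0) :
    ∀ η > (0 : ℝ), ∀ T₁ T₂ : ℝ, 0 < T₁ → T₁ ≤ T₂ →
      ∃ Kstar > (0 : ℝ), ∀ K ≥ Kstar,
        ∀ y : ℝ → Fin N → ℂ,
          (∀ t ≥ (0 : ℝ), HasDerivAt y
            (A.mulVec (y t) - K • (Q.map Complex.ofReal).mulVec (y t)) t) →
          (∀ t ≥ (0 : ℝ), cEnorm (y t) ≤ 1) →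
          ∀ yd : ℝ → Fin p → ℂ,
            (∀ t ≥ (0 : ℝ), HasDerivAt yd
              (((P.map Complex.ofReal)ᵀ * A * P.map Complex.ofReal).mulVec (yd t)) t) →
            yd 0 = ((P.map Complex.ofReal)ᵀ).mulVec (y 0) →
            ∀ t, T₁ ≤ t → t ≤ T₂ → cEnorm (y t - (P.map Complex.ofReal).mulVec (yd t)) ≤ η := by
  intro η hη T₁ T₂ hT₁ hT₁₂
  classical
  -- basic real-matrix identities
  have hQsym : Qᵀ = Q := by
    have h := hQpsd.1
    rwa [Matrix.IsHermitian, Matrix.conjTranspose_eq_transpose_of_trivial] at h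
  have hQP : Q * P = 0 := by
    ext i j
    have h := congrFun (hPker j) i
    simpa [Matrix.mul_apply, Matrix.mulVec, dotProduct] using h
  have hPtQ : Pᵀ * Q = 0 := by
    have h := congrArg Matrix.transpose hQP
    rwa [Matrix.transpose_mul, hQsym, Matrix.transpose_zero] at h
  have hlam_lb : ∀ r : ℝ, r ≠ 0 → (∃ v : Fin N → ℝ, v ≠ 0 ∧ Q.mulVec v = r • v) → lam ≤ r :=
    fun r h1 h2 => hlam.2 ⟨h1, h2⟩
  set Pc : Matrix (Fin N) (Fin p) ℂ := P.map Complex.ofReal with hPcdef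
  set Qc : Matrix (Fin N) (Fin N) ℂ := Q.map Complex.ofReal with hQcdef
  have hmapmul : ∀ {a b c : ℕ} (M₁ : Matrix (Fin a) (Fin b) ℝ) (M₂ : Matrix (Fin b) (Fin c) ℝ),
      (M₁ * M₂).map Complex.ofReal = M₁.map Complex.ofReal * M₂.map Complex.ofReal := by
    intro a b c M₁ M₂
    ext i j
    simp only [Matrix.map_apply, Matrix.mul_apply]
    push_cast
    rfl
  have hmapT : ∀ {a b : ℕ} (M : Matrix (Fin a) (Fin b) ℝ),
      Mᵀ.map Complex.ofReal = (M.map Complex.ofReal)ᵀ := by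
    intro a b M; rfl
  have hPcortho : Pcᵀ * Pc = 1 := by
    rw [hPcdef, ← hmapT, ← hmapmul, hPortho]
    exact Matrix.map_one _ Complex.ofReal_zero Complex.ofReal_one
  have hQcPc : Qc * Pc = 0 := by
    rw [hPcdef, hQcdef, ← hmapmul, hQP]
    exact Matrix.map_zero _ Complex.ofReal_zero
  have hPctQc : Pcᵀ * Qc = 0 := by
    rw [hPcdef, hQcdef, ← hmapT, ← hmapmul, hPtQ]
    exact Matrix.map_zero _ Complex.ofReal_zero
  have hPcH : Pcᴴ = Pcᵀ := by
    rw [hPcdef]; ext i j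
    simp [Matrix.conjTranspose_apply, Matrix.map_apply, Complex.conj_ofReal]
  have hPcTH : Pcᵀᴴ = Pc := by
    rw [hPcdef]; ext i j
    simp [Matrix.conjTranspose_apply, Matrix.map_apply, Complex.conj_ofReal]
  have hPP : Pcᵀ * (Pc * Pcᵀ) = Pcᵀ := by
    rw [← Matrix.mul_assoc, hPcortho, Matrix.one_mul]
  have hPi2 : (Pc * Pcᵀ) * (Pc * Pcᵀ) = Pc * Pcᵀ := by rw [Matrix.mul_assoc, hPP]
  have hPiH : (Pc * Pcᵀ)ᴴ = Pc * Pcᵀ := by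
    rw [Matrix.conjTranspose_mul, hPcTH, hPcH]
  have hQcPi : Qc * (Pc * Pcᵀ) = 0 := by rw [← Matrix.mul_assoc, hQcPc, Matrix.zero_mul]
  have hPiQc : (Pc * Pcᵀ) * Qc = 0 := by rw [Matrix.mul_assoc, hPctQc, Matrix.mul_zero]
  -- spectral bound in Euclidean form
  have hspec : ∀ x : ES N, mclm Pcᵀ x = 0 → lam * (⟪x, x⟫).re ≤ (⟪x, mclm Qc x⟫).re := by
    intro x hx
    obtain ⟨v, rfl⟩ := toE_surj x
    have hv : (Pᵀ.map Complex.ofReal) *ᵥ v = 0 := by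
      have h2 : toE (Pcᵀ *ᵥ v) = toE 0 := by rw [← mclm_toE, hx]; rfl
      have h3 := toE_inj h2
      rwa [hmapT, ← hPcdef]
    have hsb := spectral_bound Q hQpsd lam hlam_pos hlam_lb P hPortho hQP hPspan v hv
    have e1 : (⟪toE v, toE v⟫ : ℂ) = star v ⬝ᵥ v := by
      simp only [toE, inner_piLp_equiv_symm']
    have e2 : (⟪toE v, mclm Qc (toE v)⟫ : ℂ) = star v ⬝ᵥ (Q.map Complex.ofReal) *ᵥ v := by
      rw [mclm_toE]
      simp only [toE, inner_piLp_equiv_symm']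
      rfl
    rw [e1, e2]
    exact hsb
  -- continuous linear maps
  set LA := mclm A with hLAdef
  set LQ := mclm Qc with hLQdef
  set LP := mclm Pc with hLPdef
  set LPt := mclm Pcᵀ with hLPtdef
  set LB := mclm (Pcᵀ * A * Pc) with hLBdef
  set L1 := mclm ((1 - Pc * Pcᵀ) * A) with hL1def
  set L2 := mclm (Pcᵀ * A) with hL2def
  set LW := mclm (1 - Pc * Pcᵀ) with hLWdef
  set CC := ‖L1‖ with hCCdef
  set M2 := ‖L2‖ with hM2def
  set MM := ‖LB‖ + 1 with hMMdef
  have hMM : 0 < MM := by positivity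
  have hCC : 0 ≤ CC := norm_nonneg _
  have hM2 : 0 ≤ M2 := norm_nonneg _
  have hT₂pos : 0 < T₂ := lt_of_lt_of_le hT₁ hT₁₂
  set ET := Real.exp (MM * T₂) with hETdef
  have hET1 : 1 ≤ ET := Real.one_le_exp (by positivity)
  set c1 := M2 / MM * ET with hc1def
  have hc1 : 0 ≤ c1 := by positivity
  set c2 := 1 + M2 / MM * ET with hc2def
  have hc2 : 0 < c2 := by positivity
  set r := η / (3 * (c1 + 1)) with hrdef
  have hr : 0 < r := by positivity
  set δ := min T₁ (Real.log (1 + r) / MM) with hδdef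
  have hδpos : 0 < δ := lt_min hT₁ (div_pos (Real.log_pos (by linarith)) hMM)
  have hδT₁ : δ ≤ T₁ := min_le_left _ _
  have hδT₂ : δ ≤ T₂ := le_trans hδT₁ hT₁₂
  have hδexp : Real.exp (MM * δ) - 1 ≤ r := by
    have h2 : δ ≤ Real.log (1 + r) / MM := min_le_right _ _
    rw [le_div_iff₀ hMM] at h2
    have h1 : MM * δ ≤ Real.log (1 + r) := by linarith
    have h3 := Real.exp_le_exp.mpr h1
    rw [Real.exp_log (by linarith)] at h3
    linarith
  set ε₀ := η / (3 * c2) with hε₀def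
  have hε₀ : 0 < ε₀ := by positivity
  refine ⟨max 1 (max (Real.log (1 / ε₀) / (lam * δ)) (CC / (lam * ε₀ ^ 2))),
    lt_of_lt_of_le one_pos (le_max_left _ _), ?_⟩
  intro K hK y hy hybd yd hyd hyd0
  have hK1 : (1:ℝ) ≤ K := le_trans (le_max_left _ _) hK
  have hKpos : 0 < K := lt_of_lt_of_le one_pos hK1
  have hKlam : 0 < K * lam := mul_pos hKpos hlam_pos
  have hKK1 : Real.log (1 / ε₀) / (lam * δ) ≤ K :=
    le_trans (le_trans (le_max_left _ _) (le_max_right _ _)) hK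
  have hKK2 : CC / (lam * ε₀ ^ 2) ≤ K :=
    le_trans (le_trans (le_max_right _ _) (le_max_right _ _)) hK
  -- trajectories in Euclidean space
  set Y : ℝ → ES N := fun s => toE (y s) with hYdef
  set Yd : ℝ → ES p := fun s => toE (yd s) with hYddef
  have hYbd : ∀ t ≥ (0:ℝ), ‖Y t‖ ≤ 1 := by
    intro t ht
    simp only [hYdef]
    rw [← enorm_toE]
    exact hybd t ht
  have hY' : ∀ t ≥ (0:ℝ), HasDerivAt Y (LA (Y t) - K • LQ (Y t)) t := by
    intro t ht
    have h := hasDerivAt_toE (hy t ht)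
    have e : toE (A *ᵥ y t - K • Qc *ᵥ y t) = LA (Y t) - K • LQ (Y t) := by
      rw [toE_sub, toE_smul, hLAdef, hLQdef, hYdef]
      simp only [mclm_toE]
    exact e ▸ h
  -- the fast (orthogonal-complement) component
  set Wf : ℝ → ES N := fun s => LW (Y s) with hWfdef
  have hWle : ∀ t, ‖Wf t‖ ≤ ‖Y t‖ := by
    intro t
    simp only [hWfdef, hLWdef]
    exact norm_proj_le _ hPiH hPi2 (Y t)
  have hWbd : ∀ t ≥ (0:ℝ), ‖Wf t‖ ≤ 1 := fun t ht => le_trans (hWle t) (hYbd t ht)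
  have hWd : ∀ t ≥ (0:ℝ), HasDerivAt Wf (L1 (Y t) - K • LQ (Wf t)) t := by
    intro t ht
    have h := hasDerivAt_mclm (1 - Pc * Pcᵀ) (hY' t ht)
    have e : mclm (1 - Pc * Pcᵀ) (LA (Y t) - K • LQ (Y t)) = L1 (Y t) - K • LQ (Wf t) := by
      rw [map_sub]
      congr 1
      · rw [hLAdef, hL1def, ← mclm_mul]
      · rw [rsmul, _root_.map_smul, ← rsmul]
        congr 1
        simp only [hLQdef, hWfdef, hLWdef]
        calc mclm (1 - Pc * Pcᵀ) (mclm Qc (Y t))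
            = mclm ((1 - Pc * Pcᵀ) * Qc) (Y t) := (mclm_mul _ _ _).symm
          _ = mclm (Qc * (1 - Pc * Pcᵀ)) (Y t) := by
              congr 2
              rw [sub_mul, one_mul, hPiQc, mul_sub, mul_one, hQcPi]
          _ = mclm Qc (mclm (1 - Pc * Pcᵀ) (Y t)) := mclm_mul _ _ _
    exact e ▸ h
  -- squared norm of Wf and its decay
  set g : ℝ → ℝ := fun s => (⟪Wf s, Wf s⟫).re with hgdef
  set gd : ℝ → ℝ := fun s => 2 * (⟪Wf s, L1 (Y s) - K • LQ (Wf s)⟫).re with hgddef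
  have hgd : ∀ t ≥ (0:ℝ), HasDerivAt g (gd t) t := by
    intro t ht
    have h := (hWd t ht).inner ℂ (hWd t ht)
    have h3 : HasDerivAt g
        ((⟪Wf t, L1 (Y t) - K • LQ (Wf t)⟫ + ⟪L1 (Y t) - K • LQ (Wf t), Wf t⟫ : ℂ).re) t := by
      have h4 := (Complex.reCLM.hasFDerivAt).comp_hasDerivAt t h
      simpa only [Function.comp_def, Complex.reCLM_apply] using h4
    convert h3 using 1
    simp only [hgddef]
    rw [Complex.add_re]
    have e : (⟪L1 (Y t) - K • LQ (Wf t), Wf t⟫ : ℂ).re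
        = (⟪Wf t, L1 (Y t) - K • LQ (Wf t)⟫ : ℂ).re := by
      rw [← inner_conj_symm (Wf t)]
      exact Complex.conj_re _
    rw [e]; ring
  have hgd_le : ∀ t ≥ (0:ℝ), gd t ≤ 2 * CC - 2 * (K * lam) * g t := by
    intro t ht
    have h1 : (⟪Wf t, L1 (Y t)⟫ : ℂ).re ≤ CC := by
      have ha := re_inner_le_norm (𝕜 := ℂ) (Wf t) (L1 (Y t))
      simp only [RCLike.re_to_complex] at ha
      have hb : ‖L1 (Y t)‖ ≤ CC * ‖Y t‖ := L1.le_opNorm _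
      have hc := hYbd t ht
      have hd := hWbd t ht
      nlinarith [norm_nonneg (Wf t), norm_nonneg (L1 (Y t)), norm_nonneg (Y t)]
    have h2 : lam * g t ≤ (⟪Wf t, LQ (Wf t)⟫ : ℂ).re := by
      have hker : mclm Pcᵀ (Wf t) = 0 := by
        simp only [hWfdef, hLWdef]
        rw [← mclm_mul]
        have hz : Pcᵀ * (1 - Pc * Pcᵀ) = 0 := by rw [Matrix.mul_sub, Matrix.mul_one, hPP, sub_self]
        rw [hz, mclm_zero]
      have h := hspec (Wf t) hker
      rw [hLQdef, hgdef]
      exact h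
    have h3 : (⟪Wf t, K • LQ (Wf t)⟫ : ℂ).re = K * (⟪Wf t, LQ (Wf t)⟫ : ℂ).re := by
      rw [rsmul, inner_smul_right]
      simp [Complex.mul_re]
    simp only [hgddef]
    rw [inner_sub_right, Complex.sub_re, h3]
    have h4 : K * (lam * g t) ≤ K * (⟪Wf t, LQ (Wf t)⟫ : ℂ).re :=
      mul_le_mul_of_nonneg_left h2 hKpos.le
    have h5 : 2 * (K * lam) * g t = 2 * (K * (lam * g t)) := by ring
    linarith
  have hg0 : g 0 ≤ 1 := by
    simp only [hgdef]
    rw [inner_self_re]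
    exact pow_le_one₀ (norm_nonneg _) (hWbd 0 le_rfl)
  have hgbd : ∀ t ≥ (0:ℝ), g t ≤ Real.exp (-(2 * (K * lam) * t)) + CC / (K * lam) := by
    intro t ht
    set b := 2 * (K * lam) with hbdef
    have hb : 0 < b := by positivity
    set q := 2 * CC / b with hqdef
    have hq : 0 ≤ q := by positivity
    set φ : ℝ → ℝ := fun s => Real.exp (b * s) * g s - q * Real.exp (b * s) with hφdef
    set φd : ℝ → ℝ := fun s =>
      Real.exp (b * s) * b * g s + Real.exp (b * s) * gd s - q * (Real.exp (b * s) * b)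
      with hφddef
    have hφd : ∀ s ∈ Icc (0:ℝ) t, HasDerivAt φ (φd s) s := by
      intro s hs
      have he : HasDerivAt (fun s => Real.exp (b * s)) (Real.exp (b * s) * b) s := by
        have h := ((hasDerivAt_id s).const_mul b).exp
        simpa [mul_comm] using h
      have h := (he.mul (hgd s hs.1)).sub (he.const_mul q)
      rw [hφdef, hφddef]
      exact h
    have hφle : ∀ s ∈ Icc (0:ℝ) t, φd s ≤ 0 := by
      intro s hs
      have h := hgd_le s hs.1
      have he := Real.exp_pos (b * s)
      have h5 : gd s + b * g s - 2 * CC ≤ 0 := by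
        rw [hbdef] at h ⊢
        linarith
      have e : φd s = Real.exp (b * s) * (gd s + b * g s - 2 * CC) := by
        simp only [hφddef]
        rw [hqdef]
        field_simp
        ring
      rw [e]
      exact mul_nonpos_of_nonneg_of_nonpos he.le h5
    have hφt := le_of_deriv_nonpos ht hφd hφle
    rw [hφdef] at hφt
    simp only [mul_zero, Real.exp_zero, one_mul, mul_one] at hφt
    have h1 : Real.exp (b * t) * g t ≤ 1 + q * Real.exp (b * t) := by linarith
    have h2 : Real.exp (-(b * t)) * Real.exp (b * t) = 1 := by
      rw [← Real.exp_add]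
      simp
    have h3 : q = CC / (K * lam) := by
      rw [hqdef, hbdef]
      rw [div_eq_div_iff (by positivity) (by positivity)]
      ring
    have h4 := mul_le_mul_of_nonneg_left h1 (Real.exp_pos (-(b * t))).le
    calc g t = Real.exp (-(b * t)) * (Real.exp (b * t) * g t) := by
          rw [← mul_assoc, h2, one_mul]
      _ ≤ Real.exp (-(b * t)) * (1 + q * Real.exp (b * t)) := h4
      _ = Real.exp (-(b * t)) + q := by
          rw [mul_add, mul_one, mul_comm q, ← mul_assoc, h2, one_mul]
      _ = Real.exp (-(b * t)) + CC / (K * lam) := by rw [h3]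
  set εK := Real.exp (-(K * lam * δ)) + Real.sqrt (CC / (K * lam)) with hεKdef
  have hεK0 : 0 ≤ εK := by positivity
  have hWεK : ∀ t ≥ δ, ‖Wf t‖ ≤ εK := by
    intro t htδ
    have ht0 : (0:ℝ) ≤ t := le_trans hδpos.le htδ
    have h1 := hgbd t ht0
    have h2 : Real.exp (-(2 * (K * lam) * t)) ≤ Real.exp (-(K * lam * δ)) ^ 2 := by
      rw [sq, ← Real.exp_add]
      apply Real.exp_le_exp.mpr
      have hmono : 2 * (K * lam) * δ ≤ 2 * (K * lam) * t :=
        mul_le_mul_of_nonneg_left htδ (by positivity)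
      linarith
    have h3 : CC / (K * lam) = Real.sqrt (CC / (K * lam)) ^ 2 :=
      (Real.sq_sqrt (by positivity)).symm
    have h4 : g t = ‖Wf t‖ ^ 2 := by
      simp only [hgdef]
      rw [inner_self_re]
    apply norm_le_of_sq_le_sq' _ hεK0 (norm_nonneg _)
    have h5 : (0:ℝ) ≤ 2 * Real.exp (-(K * lam * δ)) * Real.sqrt (CC / (K * lam)) := by positivity
    have h6 : (Real.exp (-(K * lam * δ)) + Real.sqrt (CC / (K * lam))) ^ 2
        = Real.exp (-(K * lam * δ)) ^ 2
          + 2 * Real.exp (-(K * lam * δ)) * Real.sqrt (CC / (K * lam))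
          + Real.sqrt (CC / (K * lam)) ^ 2 := by ring
    rw [← h4, hεKdef, h6]
    linarith
  -- the slow component difference
  set d : ℝ → ES p := fun s => LPt (Y s) - Yd s with hddef
  have hd0 : d 0 = 0 := by
    simp only [hddef, hLPtdef, hYdef, hYddef]
    rw [mclm_toE, (congrArg toE hyd0 : toE (yd 0) = toE (Pcᵀ *ᵥ y 0))]
    exact sub_self _
  have hdd : ∀ t ≥ (0:ℝ), HasDerivAt d (LB (d t) + L2 (Wf t)) t := by
    intro t ht
    have h1 := hasDerivAt_mclm Pcᵀ (hY' t ht)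
    have h2 := hasDerivAt_toE (hyd t ht)
    have h2' : HasDerivAt (fun s => toE (yd s)) (LB (Yd t)) t := by
      have e : toE ((Pcᵀ * A * Pc) *ᵥ yd t) = LB (Yd t) := by
        rw [hLBdef, hYddef]
        simp only [mclm_toE]
      exact e ▸ h2
    have h := h1.sub h2'
    have e : mclm Pcᵀ (LA (Y t) - K • LQ (Y t)) - LB (Yd t) = LB (d t) + L2 (Wf t) := by
      rw [map_sub, rsmul, _root_.map_smul]
      have e1 : mclm Pcᵀ (LQ (Y t)) = 0 := by
        rw [hLQdef, ← mclm_mul, hPctQc, mclm_zero]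
      have e2 : mclm Pcᵀ (LA (Y t)) = LB (LPt (Y t)) + L2 (Wf t) := by
        rw [hLAdef, ← mclm_mul]
        have em : Pcᵀ * A = (Pcᵀ * A * Pc) * Pcᵀ + (Pcᵀ * A) * (1 - Pc * Pcᵀ) := by
          rw [Matrix.mul_sub, Matrix.mul_one, Matrix.mul_assoc (Pcᵀ * A) Pc Pcᵀ]
          abel
        simp only [hLBdef, hLPtdef, hL2def, hWfdef, hLWdef]
        obtain ⟨v, hv⟩ := toE_surj (Y t)
        rw [← hv]
        simp only [mclm_toE]
        rw [← toE_add]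
        congr 1
        simp only [Matrix.mulVec_mulVec]
        rw [← Matrix.add_mulVec, ← em]
      rw [e1, e2]
      simp only [hddef]
      rw [map_sub]
      module
    simp only [hddef]
    exact e ▸ h
  have hLBle : ∀ x : ES p, ‖LB x‖ ≤ MM * ‖x‖ := by
    intro x
    refine le_trans (LB.le_opNorm x) ?_
    rw [hMMdef]
    exact mul_le_mul_of_nonneg_right (by linarith) (norm_nonneg x)
  have hL2le : ∀ x : ES N, ‖L2 x‖ ≤ M2 * ‖x‖ := fun x => L2.le_opNorm x
  -- Gronwall on [0, δ]
  have hg1 : ∀ x ∈ Icc (0:ℝ) δ, ‖d x‖ ≤ gronwallBound 0 MM M2 (x - 0) := by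
    apply norm_le_gronwallBound_of_norm_deriv_right_le
    · exact fun x hx => ((hdd x hx.1).continuousAt).continuousWithinAt
    · exact fun x hx => (hdd x hx.1).hasDerivWithinAt
    · rw [hd0, norm_zero]
    · intro x hx
      refine le_trans (norm_add_le _ _) ?_
      have ha := hLBle (d x)
      have hb : ‖L2 (Wf x)‖ ≤ M2 * 1 :=
        le_trans (hL2le _) (mul_le_mul_of_nonneg_left (hWbd x hx.1) hM2)
      refine le_trans (add_le_add ha hb) (le_of_eq ?_)
      rw [mul_one]
  have hdδ : ‖d δ‖ ≤ M2 / MM * (Real.exp (MM * δ) - 1) := by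
    have h := hg1 δ ⟨hδpos.le, le_rfl⟩
    rw [sub_zero] at h
    simp only [gronwallBound_of_K_ne_0 hMM.ne'] at h
    rw [zero_mul, zero_add] at h
    exact h
  -- Gronwall on [δ, T₂]
  have hg2 : ∀ x ∈ Icc δ T₂, ‖d x‖ ≤ gronwallBound (‖d δ‖) MM (M2 * εK) (x - δ) := by
    apply norm_le_gronwallBound_of_norm_deriv_right_le
    · exact fun x hx => ((hdd x (le_trans hδpos.le hx.1)).continuousAt).continuousWithinAt
    · exact fun x hx => (hdd x (le_trans hδpos.le hx.1)).hasDerivWithinAt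
    · exact le_rfl
    · intro x hx
      refine le_trans (norm_add_le _ _) ?_
      have ha := hLBle (d x)
      have hb : ‖L2 (Wf x)‖ ≤ M2 * εK :=
        le_trans (hL2le _) (mul_le_mul_of_nonneg_left (hWεK x hx.1) hM2)
      exact add_le_add ha hb
  -- conclusion
  intro t hT₁t htT₂
  have htδ : δ ≤ t := le_trans hδT₁ hT₁t
  have ht0 : (0:ℝ) ≤ t := le_trans hδpos.le htδ
  have hdec : toE (y t - Pc *ᵥ yd t) = Wf t + LP (d t) := by
    rw [toE_sub]
    simp only [hWfdef, hddef, hLPdef, hLPtdef, hLWdef, hYdef, hYddef]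
    rw [← mclm_toE, map_sub, ← mclm_mul]
    have hsum : mclm (1 - Pc * Pcᵀ) (toE (y t)) + mclm (Pc * Pcᵀ) (toE (y t)) = toE (y t) := by
      rw [← mclm_add, sub_add_cancel, mclm_one]
    rw [add_sub, hsum]
  have hPn : ‖LP (d t)‖ = ‖d t‖ := by
    rw [hLPdef]
    exact norm_mclm_isometry Pc (by rw [hPcH, hPcortho]) (d t)
  have hWt := hWεK t htδ
  have hdt := hg2 t ⟨htδ, htT₂⟩
  have hgb := gronwallBound_le (ε := M2 * εK) (norm_nonneg (d δ)) hMM (by positivity)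
    (sub_nonneg.mpr htδ) (le_trans (sub_le_self t hδpos.le) htT₂)
  have hε1 : Real.exp (-(K * lam * δ)) ≤ ε₀ := arith1 hδpos hlam_pos hε₀ hKK1
  have hε2 : Real.sqrt (CC / (K * lam)) ≤ ε₀ := arith2 hlam_pos hKpos hε₀ hCC hKK2
  have hεK2 : εK ≤ 2 * ε₀ := by
    rw [hεKdef]
    calc Real.exp (-(K * lam * δ)) + Real.sqrt (CC / (K * lam)) ≤ ε₀ + ε₀ := add_le_add hε1 hε2
      _ = 2 * ε₀ := by ring
  rw [enorm_toE, hdec]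
  refine le_trans (norm_add_le _ _) ?_
  rw [hPn]
  have hdtb : ‖d t‖ ≤ (M2 / MM * r + M2 * εK / MM) * ET := by
    refine le_trans hdt (le_trans hgb ?_)
    rw [hETdef]
    gcongr
    exact le_trans hdδ (mul_le_mul_of_nonneg_left hδexp (by positivity))
  have e1 : εK + (M2 / MM * r + M2 * εK / MM) * ET = εK * c2 + c1 * r := by
    rw [hc1def, hc2def]; ring
  have e2 : εK * c2 ≤ 2 * ε₀ * c2 := mul_le_mul_of_nonneg_right hεK2 hc2.le
  have e3 : 2 * ε₀ * c2 = 2 * η / 3 := by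
    rw [hε₀def]; exact arith5 hc2
  have e4 : c1 * r ≤ η / 3 := by
    rw [hrdef]; exact arith4 hc1 hη
  exact arith3 hWt hdtb e1 hεK2 hc2 e3 e4

end
end
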